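/- For every plane tree T with n edges (encoded as a noncrossing perfect matching on {1,...,2n}), the matchings T and φ(T) form a meander: drawing T above and φ(T) below a line on the same 2n endpoints yields a single closed loop. -/

import Mathlib

/-- A plane tree: a root with a linearly ordered list of subtrees. -/
inductive PlaneTree : Type
  | node : List PlaneTree → PlaneTree

/-- Number of edges of a plane tree. -/
def PlaneTree.edges : PlaneTree → ℕ
  | .node ts => (ts.attach.map fun t => t.1.edges + 1).sum
decreasing_by
  have := List.sizeOf_lt_of_mem t.2
  simp only [PlaneTree.node.sizeOf_spec] at *
  omega

/-- Boundary labeling of a forest starting at label `i`: each edge of the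
tree receives the labels on its left and right sides. -/
def matchList : ℕ → List PlaneTree → Finset (ℕ × ℕ)
  | _, [] => ∅
  | i, PlaneTree.node cs :: ts =>
    insert (i, i + 2 * (PlaneTree.node cs).edges + 1)
      (matchList (i + 1) cs ∪ matchList (i + 2 * (PlaneTree.node cs).edges + 2) ts)
termination_by i ts => sizeOf ts

/-- The noncrossing perfect matching on `{1,…,2n}` encoding a plane tree with
`n` edges, via the boundary labeling `1,…,2n` counter-clockwise from the root. -/
def PlaneTree.toMatching : PlaneTree → Finset (ℕ × ℕ)
  | .node ts => matchList 1 ts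

/-- `M` is a perfect matching of `{1,…,2n}`, with pairs written `(i,j)`, `i < j`. -/
def IsMatching (n : ℕ) (M : Finset (ℕ × ℕ)) : Prop :=
  (∀ p ∈ M, 1 ≤ p.1 ∧ p.1 < p.2 ∧ p.2 ≤ 2 * n) ∧
  ∀ k, 1 ≤ k → k ≤ 2 * n → ∃! p : ℕ × ℕ, p ∈ M ∧ (p.1 = k ∨ p.2 = k)

/-- `M` is a noncrossing perfect matching of `{1,…,2n}`. -/
def IsNoncrossingMatching (n : ℕ) (M : Finset (ℕ × ℕ)) : Prop :=
  IsMatching n M ∧ ¬ ∃ a b c d : ℕ, a < b ∧ b < c ∧ c < d ∧ (a, c) ∈ M ∧ (b, d) ∈ M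

/-- The cyclic index-shift map `φ` on matchings: shift all indices down by one,
with `1 ↦ 2n`. -/
def phi (n : ℕ) (M : Finset (ℕ × ℕ)) : Finset (ℕ × ℕ) :=
  ((M.filter fun p => p.1 = 1).image fun p => (p.2 - 1, 2 * n)) ∪
  ((M.filter fun p => p.1 ≠ 1).image fun p => (p.1 - 1, p.2 - 1))

/-- Adjacency via a chord set: `a` and `b` are joined by a chord of `S`. -/
def ChordAdj (S : Finset (ℕ × ℕ)) (a b : ℕ) : Prop := (a, b) ∈ S ∨ (b, a) ∈ S

/-- Connectivity via chords of `S`. -/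
def ChordConn (S : Finset (ℕ × ℕ)) (a b : ℕ) : Prop :=
  Relation.ReflTransGen (ChordAdj S) a b

/-- Two noncrossing perfect matchings on `{1,…,2n}` form a meander: drawing one
above and one below the line yields a single closed loop, i.e. the union of
their chords connects all `2n` points. -/
def FormMeander (n : ℕ) (M M' : Finset (ℕ × ℕ)) : Prop :=
  ∀ k l : ℕ, 1 ≤ k → k ≤ 2 * n → 1 ≤ l → l ≤ 2 * n → ChordConn (M ∪ M') k l

/-- The least period of `x` under `f` is `l`. -/
def OrbitLen {α : Type*} (f : α → α) (x : α) (l : ℕ) : Prop :=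
  0 < l ∧ f^[l] x = x ∧ ∀ m : ℕ, 0 < m → f^[m] x = x → l ≤ m

theorem edges_node (ts : List PlaneTree) :
    (PlaneTree.node ts).edges = (ts.map fun t => t.edges + 1).sum := by
  rw [PlaneTree.edges]
  congr 1
  rw [List.map_attach_eq_pmap]
  simp [List.pmap_eq_map]

theorem matchList_cons (i : ℕ) (cs ts : List PlaneTree) :
    matchList i (PlaneTree.node cs :: ts) =
      insert (i, i + 2 * (PlaneTree.node cs).edges + 1)
        (matchList (i + 1) cs ∪ matchList (i + 2 * (PlaneTree.node cs).edges + 2) ts) := by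
  rw [matchList]

theorem matchList_fst_ge : ∀ (ts : List PlaneTree) (i : ℕ), ∀ p ∈ matchList i ts, i ≤ p.1
  | [], i => by simp [matchList]
  | PlaneTree.node cs :: ts, i => by
    rw [matchList_cons]
    intro p hp
    rcases Finset.mem_insert.1 hp with h | h
    · simp [h]
    rcases Finset.mem_union.1 h with h | h
    · have := matchList_fst_ge cs (i + 1) p h; omega
    · have := matchList_fst_ge ts (i + 2 * (PlaneTree.node cs).edges + 2) p h; omega
termination_by ts => sizeOf ts

theorem chordConn_symm {S : Finset (ℕ × ℕ)} {a b : ℕ} (h : ChordConn S a b) :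
    ChordConn S b a :=
  (@Relation.ReflTransGen.symmetric _ (ChordAdj S) ⟨fun _ _ hxy => Or.symm hxy⟩).symm _ _ h

theorem conn_lemma : ∀ (ts : List PlaneTree) (i0 : ℕ) (S : Finset (ℕ × ℕ)),
    (∀ p ∈ matchList (i0 + 1) ts, p ∈ S ∧ (p.1 - 1, p.2 - 1) ∈ S) →
    ∀ k, i0 ≤ k → k ≤ i0 + 2 * (PlaneTree.node ts).edges → ChordConn S i0 k
  | [], i0, S => by
    intro _ k hk1 hk2
    have h0 : (PlaneTree.node ([] : List PlaneTree)).edges = 0 := by simp [edges_node]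
    have : k = i0 := by omega
    subst this
    exact Relation.ReflTransGen.refl
  | PlaneTree.node cs :: ts, i0, S => by
    intro hsub k hk1 hk2
    have hE : (PlaneTree.node (PlaneTree.node cs :: ts)).edges
        = (PlaneTree.node cs).edges + 1 + (PlaneTree.node ts).edges := by
      rw [edges_node, List.map_cons, List.sum_cons, ← edges_node]
    set e := (PlaneTree.node cs).edges with he
    -- membership facts
    have hmem : ∀ p ∈ matchList (i0 + 1) (PlaneTree.node cs :: ts), p ∈ S ∧ (p.1 - 1, p.2 - 1) ∈ S := hsub
    rw [matchList_cons] at hmem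
    have h0 : (i0 + 1, i0 + 1 + 2 * e + 1) ∈ S ∧
        ((i0 + 1 : ℕ) - 1, (i0 + 1 + 2 * e + 1 : ℕ) - 1) ∈ S :=
      hmem _ (Finset.mem_insert_self _ _)
    have hhead : (i0 + 1, i0 + 2 * e + 2) ∈ S := by
      have := h0.1; convert this using 2; omega
    have hshift : (i0, i0 + 2 * e + 1) ∈ S := by
      have := h0.2; convert this using 2 <;> omega
    have hsub1 : ∀ p ∈ matchList (i0 + 1 + 1) cs, p ∈ S ∧ (p.1 - 1, p.2 - 1) ∈ S := by
      intro p hp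
      exact hmem p (Finset.mem_insert_of_mem (Finset.mem_union_left _ hp))
    have hsub2 : ∀ p ∈ matchList (i0 + 2 * e + 2 + 1) ts, p ∈ S ∧ (p.1 - 1, p.2 - 1) ∈ S := by
      intro p hp
      refine hmem p (Finset.mem_insert_of_mem (Finset.mem_union_right _ ?_))
      have : i0 + 2 * e + 2 + 1 = i0 + 1 + 2 * e + 2 := by omega
      rwa [this] at hp
    have IH1 := conn_lemma cs (i0 + 1) S hsub1
    have IH2 := conn_lemma ts (i0 + 2 * e + 2) S hsub2
    -- i0 connected to i0 + 2e + 1 directly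
    have c1 : ChordConn S i0 (i0 + 2 * e + 1) := Relation.ReflTransGen.single (Or.inl hshift)
    -- i0 connected to i0 + 1
    have c2 : ChordConn S i0 (i0 + 1) := by
      refine c1.trans (chordConn_symm ?_)
      exact IH1 (i0 + 2 * e + 1) (by omega) (by omega)
    -- i0 connected to i0 + 2e + 2
    have c3 : ChordConn S i0 (i0 + 2 * e + 2) := by
      refine c2.trans (Relation.ReflTransGen.single (Or.inl hhead))
    rcases Nat.lt_or_ge k (i0 + 1) with h | h
    · have : k = i0 := by omega
      subst this; exact Relation.ReflTransGen.refl
    rcases Nat.lt_or_ge k (i0 + 2 * e + 2) with h' | h'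
    · exact c2.trans (IH1 k (by omega) (by omega))
    · exact c3.trans (IH2 k (by omega) (by omega))
termination_by ts => sizeOf ts

/-- A plane tree `T` with `n` edges and its shift `φ(T)` form a meander. -/
theorem phi_meander (n : ℕ) (T : PlaneTree) (hT : T.edges = n) :
    FormMeander n T.toMatching (phi n T.toMatching) := by
  obtain ⟨ts⟩ := T
  intro k l hk1 hk2 hl1 hl2
  match ts with
  | [] =>
    exfalso
    have h0 : (PlaneTree.node ([] : List PlaneTree)).edges = 0 := by simp [edges_node]
    omega
  | PlaneTree.node cs :: ts' =>
    set e := (PlaneTree.node cs).edges with he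
    have hE : (PlaneTree.node (PlaneTree.node cs :: ts')).edges
        = e + 1 + (PlaneTree.node ts').edges := by
      rw [edges_node, List.map_cons, List.sum_cons, ← edges_node, he]
    set M := (PlaneTree.node (PlaneTree.node cs :: ts')).toMatching with hM
    set S := M ∪ phi n M with hS
    have hMeq : M = insert (1, 1 + 2 * e + 1)
        (matchList (1 + 1) cs ∪ matchList (1 + 2 * e + 2) ts') := by
      rw [hM]
      show matchList 1 (PlaneTree.node cs :: ts') = _
      rw [matchList_cons]
    have hshift : ∀ p ∈ M, p.1 ≠ 1 → (p.1 - 1, p.2 - 1) ∈ S := by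
      intro p hp hne
      refine Finset.mem_union_right _ (Finset.mem_union_right _ ?_)
      exact Finset.mem_image.2 ⟨p, Finset.mem_filter.2 ⟨hp, hne⟩, rfl⟩
    have hsub1 : ∀ p ∈ matchList (1 + 1) cs, p ∈ S ∧ (p.1 - 1, p.2 - 1) ∈ S := by
      intro p hp
      have hpM : p ∈ M := by
        rw [hMeq]; exact Finset.mem_insert_of_mem (Finset.mem_union_left _ hp)
      have hge := matchList_fst_ge cs (1 + 1) p hp
      exact ⟨Finset.mem_union_left _ hpM, hshift p hpM (by omega)⟩
    have hsub2 : ∀ p ∈ matchList (2 * e + 2 + 1) ts', p ∈ S ∧ (p.1 - 1, p.2 - 1) ∈ S := by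
      intro p hp
      have hp' : p ∈ matchList (1 + 2 * e + 2) ts' := by
        rwa [show (1 + 2 * e + 2 : ℕ) = 2 * e + 2 + 1 by omega]
      have hpM : p ∈ M := by
        rw [hMeq]; exact Finset.mem_insert_of_mem (Finset.mem_union_right _ hp')
      have hge := matchList_fst_ge ts' _ p hp'
      exact ⟨Finset.mem_union_left _ hpM, hshift p hpM (by omega)⟩
    have conn1 := conn_lemma cs 1 S hsub1
    have conn2 := conn_lemma ts' (2 * e + 2) S hsub2
    have chead : ChordConn S 1 (2 * e + 2) := by
      refine Relation.ReflTransGen.single (Or.inl ?_)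
      have : (1, 1 + 2 * e + 1) ∈ M := by rw [hMeq]; exact Finset.mem_insert_self _ _
      have h := Finset.mem_union_left (phi n M) this
      rwa [show (1 + 2 * e + 1 : ℕ) = 2 * e + 2 by omega] at h
    have hconn : ∀ m, 1 ≤ m → m ≤ 2 * n → ChordConn S 1 m := by
      intro m hm1 hm2
      rcases Nat.lt_or_ge m (2 * e + 2) with h | h
      · exact conn1 m hm1 (by omega)
      · exact chead.trans (conn2 m h (by omega))
    exact (chordConn_symm (hconn k hk1 hk2)).trans (hconn l hl1 hl2)
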